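/- Let K ≥ 1, Δ_K ⊂ ℝ^K the probability simplex, L, ℓ ∈ ℝ^K, and let φ be a twice continuously differentiable strictly convex function, with positive-definite Hessian, on an open convex set containing the segment between p and q, where p minimizes x ↦ ⟨x, L⟩ + φ(x) over Δ_K and q minimizes x ↦ ⟨x, L + ℓ⟩ + φ(x) over Δ_K (both with strictly positive coordinates), and ∇φ(p) = −L + c·𝟙 for some c ∈ ℝ. Then there exists η ∈ [0,1] such that, with ξ = η·p + (1−η)·q, one has ⟨p − q, ℓ⟩ − D(q, p) ≤ 2·ℓᵀ (∇²φ(ξ))^{−1} ℓ, where D(x, y) = φ(x) − φ(y) − ⟨∇φ(y), x − y⟩. -/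

import Mathlib

open Matrix

lemma taylor2_aux {g g1 g2 : ℝ → ℝ} {U : Set ℝ} (hU : IsOpen U) (hIcc : Set.Icc (0:ℝ) 1 ⊆ U)
    (h1 : ∀ t ∈ U, HasDerivAt g (g1 t) t) (h2 : ∀ t ∈ U, HasDerivAt g1 (g2 t) t) :
    ∃ t ∈ Set.Ioo (0:ℝ) 1, g 1 - g 0 - g1 0 = g2 t / 2 := by
  have hderiv : ∀ t ∈ U, deriv g t = g1 t := fun t ht => (h1 t ht).deriv
  have hg1cont : ContinuousOn g1 U := fun t ht => (h2 t ht).continuousAt.continuousWithinAt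
  have hCD : ContDiffOn ℝ ((0:ℕ) + 1) g U := by
    rw [contDiffOn_succ_iff_deriv_of_isOpen hU]
    refine ⟨fun t ht => (h1 t ht).differentiableAt.differentiableWithinAt, by simp, ?_⟩
    rw [show ((0:ℕ) : WithTop ℕ∞) = 0 by rfl, contDiffOn_zero]
    exact hg1cont.congr hderiv
  have hf : ContDiffOn ℝ (1:ℕ) g (Set.Icc 0 1) := by
    exact_mod_cast hCD.mono hIcc
  have hdW : ∀ t ∈ Set.Icc (0:ℝ) 1, derivWithin g (Set.Icc 0 1) t = g1 t := fun t ht =>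
    (h1 t (hIcc ht)).hasDerivWithinAt.derivWithin (uniqueDiffOn_Icc_zero_one t ht)
  have hitd1 : ∀ t ∈ Set.Icc (0:ℝ) 1, iteratedDerivWithin 1 g (Set.Icc 0 1) t = g1 t := by
    intro t ht
    rw [iteratedDerivWithin_one]
    exact hdW t ht
  have hf' : DifferentiableOn ℝ (iteratedDerivWithin 1 g (Set.Icc 0 1)) (Set.Ioo 0 1) := by
    have : DifferentiableOn ℝ g1 (Set.Ioo 0 1) := fun t ht =>
      (h2 t (hIcc (Set.Ioo_subset_Icc_self ht))).differentiableAt.differentiableWithinAt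
    exact this.congr fun t ht => hitd1 t (Set.Ioo_subset_Icc_self ht)
  obtain ⟨t, htIoo, hT⟩ := taylor_mean_remainder_lagrange (n := 1) (x₀ := 0) (x := 1) zero_ne_one
    (by rwa [Set.uIcc_of_le zero_le_one]) (by rwa [Set.uIcc_of_le zero_le_one, Set.uIoo_of_le zero_le_one])
  rw [Set.uIoo_of_le zero_le_one] at htIoo
  rw [Set.uIcc_of_le zero_le_one] at hT
  refine ⟨t, htIoo, ?_⟩
  have htIcc : t ∈ Set.Icc (0:ℝ) 1 := Set.Ioo_subset_Icc_self htIoo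
  have hTay : taylorWithinEval g 1 (Set.Icc 0 1) 0 1 = g 0 + g1 0 := by
    rw [taylor_within_apply]
    rw [Finset.sum_range_succ, Finset.sum_range_one]
    rw [iteratedDerivWithin_zero, hitd1 0 (Set.left_mem_Icc.2 zero_le_one)]
    norm_num
  have hit2 : iteratedDerivWithin 2 g (Set.Icc 0 1) t = g2 t := by
    rw [show (2:ℕ) = 1 + 1 from rfl,
      iteratedDerivWithin_succ]
    rw [derivWithin_congr hitd1 (hitd1 t htIcc)]
    exact (h2 t (hIcc htIcc)).hasDerivWithinAt.derivWithin (uniqueDiffOn_Icc_zero_one t htIcc)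
  rw [hTay, hit2] at hT
  norm_num [Nat.factorial] at hT
  linarith

lemma quad_key {n : Type*} [Fintype n] [DecidableEq n] {H : Matrix n n ℝ} (hH : H.PosDef)
    (w l : n → ℝ) :
    w ⬝ᵥ l - (w ⬝ᵥ (H *ᵥ w)) / 2 ≤ 2 * (l ⬝ᵥ (H⁻¹ *ᵥ l)) := by
  have hdet : IsUnit H.det := hH.det_pos.ne'.isUnit
  have hH1 : H * H⁻¹ = 1 := Matrix.mul_nonsing_inv H hdet
  set z := H⁻¹ *ᵥ l with hz
  have hHz : H *ᵥ z = l := by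
    rw [hz, Matrix.mulVec_mulVec, hH1, Matrix.one_mulVec]
  have h0 : 0 ≤ l ⬝ᵥ (H⁻¹ *ᵥ l) := by
    simpa using hH.inv.posSemidef.re_dotProduct_nonneg l
  have hu : 0 ≤ (w - z) ⬝ᵥ (H *ᵥ (w - z)) := by
    simpa using hH.posSemidef.re_dotProduct_nonneg (w - z)
  have hsym : z ⬝ᵥ (H *ᵥ w) = w ⬝ᵥ l := by
    rw [Matrix.dotProduct_mulVec, ← Matrix.mulVec_transpose]
    have : Hᵀ = H := hH.isHermitian
    rw [this, hHz, dotProduct_comm]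
  have hexp : (w - z) ⬝ᵥ (H *ᵥ (w - z))
      = w ⬝ᵥ (H *ᵥ w) - 2 * (w ⬝ᵥ l) + l ⬝ᵥ (H⁻¹ *ᵥ l) := by
    rw [Matrix.mulVec_sub, sub_dotProduct, dotProduct_sub,
      dotProduct_sub, hHz, hsym]
    have hz2 : z ⬝ᵥ l = l ⬝ᵥ (H⁻¹ *ᵥ l) := by rw [dotProduct_comm, hz]
    rw [hz2]
    ring
  rw [hexp] at hu
  linarith

/-- Second claim of Lemma C.8 (`app_breg_analysis_opt_and_interm`). -/
theorem ftrl_stability_local_norm_bound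
    (K : ℕ) (hK : 1 ≤ K)
    (L ℓ : Fin K → ℝ)
    (S : Set (Fin K → ℝ)) (hSopen : IsOpen S) (hSconv : Convex ℝ S)
    (φ : (Fin K → ℝ) → ℝ) (gradφ : (Fin K → ℝ) → Fin K → ℝ)
    (hess : (Fin K → ℝ) → Matrix (Fin K) (Fin K) ℝ)
    (hφdiff : ∀ x ∈ S, HasFDerivAt φ
      (∑ i, gradφ x i • (ContinuousLinearMap.proj i : (Fin K → ℝ) →L[ℝ] ℝ)) x)
    (hgraddiff : ∀ x ∈ S, ∀ i, HasFDerivAt (fun y => gradφ y i)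
      (∑ j, hess x i j • (ContinuousLinearMap.proj j : (Fin K → ℝ) →L[ℝ] ℝ)) x)
    (hhesscont : ContinuousOn hess S)
    (hφconv : StrictConvexOn ℝ S φ)
    (hhesspd : ∀ x ∈ S, (hess x).PosDef)
    (p q : Fin K → ℝ) (c : ℝ)
    (hseg : segment ℝ p q ⊆ S)
    (hppos : ∀ i, 0 < p i) (hpsum : ∑ i, p i = 1)
    (hqpos : ∀ i, 0 < q i) (hqsum : ∑ i, q i = 1)
    (hpmin : ∀ x : Fin K → ℝ, (∀ i, 0 ≤ x i) → ∑ i, x i = 1 →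
      (∑ i, p i * L i) + φ p ≤ (∑ i, x i * L i) + φ x)
    (hqmin : ∀ x : Fin K → ℝ, (∀ i, 0 ≤ x i) → ∑ i, x i = 1 →
      (∑ i, q i * (L i + ℓ i)) + φ q ≤ (∑ i, x i * (L i + ℓ i)) + φ x)
    (hgradp : ∀ i, gradφ p i = -L i + c) :
    ∃ η ∈ Set.Icc (0 : ℝ) 1,
      (∑ i, (p i - q i) * ℓ i) -
          (φ q - φ p - ∑ i, gradφ p i * (q i - p i))
        ≤ 2 * (ℓ ⬝ᵥ ((hess (η • p + (1 - η) • q))⁻¹ *ᵥ ℓ)) := by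
  classical
  set γ : ℝ → (Fin K → ℝ) := fun t => p + t • (q - p) with hγ
  have hγcont : Continuous γ := by fun_prop
  set U : Set ℝ := γ ⁻¹' S with hU
  have hUopen : IsOpen U := hSopen.preimage hγcont
  have hγseg : ∀ t ∈ Set.Icc (0:ℝ) 1, γ t ∈ segment ℝ p q := by
    intro t ht
    exact ⟨1 - t, t, by linarith [ht.2], ht.1, by ring, by module⟩
  have hIccU : Set.Icc (0:ℝ) 1 ⊆ U := fun t ht => hseg (hγseg t ht)
  have hγderiv : ∀ t : ℝ, HasDerivAt γ (q - p) t := by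
    intro t
    have := ((hasDerivAt_id t).smul_const (q - p)).const_add p
    rw [one_smul] at this
    exact this
  set g1 : ℝ → ℝ := fun t => ∑ i, gradφ (γ t) i * (q i - p i) with hg1
  set g2 : ℝ → ℝ := fun t => ∑ i, (∑ j, hess (γ t) i j * (q j - p j)) * (q i - p i) with hg2
  have h1 : ∀ t ∈ U, HasDerivAt (fun t => φ (γ t)) (g1 t) t := by
    intro t ht
    have := (hφdiff (γ t) ht).comp_hasDerivAt t (hγderiv t)
    simp [g1, ContinuousLinearMap.sum_apply, Pi.sub_apply] at this
    exact this
  have h2 : ∀ t ∈ U, HasDerivAt g1 (g2 t) t := by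
    intro t ht
    refine HasDerivAt.fun_sum fun i _ => ?_
    have := ((hgraddiff (γ t) ht i).comp_hasDerivAt t (hγderiv t)).mul_const (q i - p i)
    simpa [ContinuousLinearMap.sum_apply, Pi.sub_apply] using this
  obtain ⟨t, htIoo, hT⟩ := taylor2_aux hUopen hIccU h1 h2
  have hγ0 : γ 0 = p := by simp [γ]
  have hγ1 : γ 1 = q := by
    funext i; simp [γ]
  have htIcc : t ∈ Set.Icc (0:ℝ) 1 := Set.Ioo_subset_Icc_self htIoo
  refine ⟨1 - t, ⟨by linarith [htIoo.2], by linarith [htIoo.1]⟩, ?_⟩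
  have hξeq : (1 - t) • p + (1 - (1 - t)) • q = γ t := by
    simp only [γ]; module
  rw [hξeq]
  have hξS : γ t ∈ S := hIccU htIcc
  rw [hγ0, hγ1] at hT
  have hBreg : φ q - φ p - ∑ i, gradφ p i * (q i - p i) = g2 t / 2 := by
    rw [← hT]; rw [hg1]; simp [hγ0]
  rw [hBreg]
  set H := hess (γ t) with hH
  have hpd : H.PosDef := hhesspd _ hξS
  have key := quad_key hpd (p - q) ℓ
  have hdot : ∑ i, (p i - q i) * ℓ i = (p - q) ⬝ᵥ ℓ := by
    simp [dotProduct, Pi.sub_apply]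
  have hquad : g2 t = (p - q) ⬝ᵥ (H *ᵥ (p - q)) := by
    simp only [g2, dotProduct, Matrix.mulVec, Pi.sub_apply, hH]
    refine Finset.sum_congr rfl fun i _ => ?_
    rw [Finset.sum_mul, Finset.mul_sum]
    exact Finset.sum_congr rfl fun j _ => by ring
  rw [hdot, hquad]
  linarith [key]
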